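/- Fix ε ∈ (0,1), γ = 1/2 and β > 0. Let A be a continuous linear operator on the complex Banach space C(Φ) of continuous complex-valued functions on Φ = [log ε, 0] × {ℓ, r}, satisfying Ag(s,α) = ∫_{log ε − s}^0 g(s+t, r) β e^{(1−γ)t} dt + ∫_0^{−s} g(s+t, ℓ) a_α e^{γ t} dt for all g ∈ C(Φ) and (s,α) ∈ Φ, where a_ℓ = β and a_r = γ + β. Then β · log(1/ε) ≤ ρ_ε(A) ≤ (γ + β) · log(1/ε), where ρ_ε(A) denotes the spectral radius of A. -/

import Mathlib

open MeasureTheory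

set_option maxHeartbeats 1000000 in
theorem spectralRadius_IBP_operator_critical (ε γ β : ℝ) (hε : ε ∈ Set.Ioo (0 : ℝ) 1)
    (hγ : γ = 1 / 2) (hβ : 0 < β)
    (A : C(Set.Icc (Real.log ε) (0 : ℝ) × Bool, ℂ) →L[ℂ]
         C(Set.Icc (Real.log ε) (0 : ℝ) × Bool, ℂ))
    (hA : ∀ (g : C(Set.Icc (Real.log ε) (0 : ℝ) × Bool, ℂ))
        (s : Set.Icc (Real.log ε) (0 : ℝ)) (α : Bool),
      A g (s, α) =
        (∫ t in (Real.log ε - s.1)..(0 : ℝ),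
          g (Set.projIcc (Real.log ε) 0 (Real.log_nonpos hε.1.le hε.2.le) (s.1 + t), true)
            * ((β * Real.exp ((1 - γ) * t) : ℝ) : ℂ))
        + ∫ t in (0 : ℝ)..(-s.1),
          g (Set.projIcc (Real.log ε) 0 (Real.log_nonpos hε.1.le hε.2.le) (s.1 + t), false)
            * (((if α then γ + β else β) * Real.exp (γ * t) : ℝ) : ℂ)) :
    ENNReal.ofReal (β * Real.log (1 / ε)) ≤ spectralRadius ℂ A ∧
      spectralRadius ℂ A ≤ ENNReal.ofReal ((γ + β) * Real.log (1 / ε)) := by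
  subst hγ
  have hε0 : (0:ℝ) < ε := hε.1
  have hε1 : ε < 1 := hε.2
  have hl : Real.log ε < 0 := Real.log_neg hε0 hε1
  have hl0 : Real.log ε ≤ 0 := hl.le
  set pr := Set.projIcc (Real.log ε) 0 (Real.log_nonpos hε.1.le hε.2.le) with hpr_def
  set M : ℝ := (1/2 + β) * (-Real.log ε) with hM_def
  set m : ℝ := β * (-Real.log ε) with hm_def
  have hnl : (0:ℝ) < -Real.log ε := by linarith
  have hM0 : 0 < M := by positivity
  have hm0 : 0 < m := by positivity
  -- continuity helper
  have hcont : ∀ (g : C(Set.Icc (Real.log ε) (0:ℝ) × Bool, ℂ)) (s : ℝ) (b : Bool),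
      Continuous fun t : ℝ => g (pr (s + t), b) := by
    intro g s b
    exact g.continuous.comp (((continuous_projIcc).comp
      (continuous_const.add continuous_id)).prodMk continuous_const)
  -- the one-step upper bound
  have key_up : ∀ (c : ℝ) (g : C(Set.Icc (Real.log ε) (0:ℝ) × Bool, ℂ)), 0 ≤ c →
      (∀ y : Set.Icc (Real.log ε) (0:ℝ) × Bool, ‖g y‖ ≤ c * Real.exp (-y.1.1 / 2)) →
      ∀ y : Set.Icc (Real.log ε) (0:ℝ) × Bool,
        ‖A g y‖ ≤ (M * c) * Real.exp (-y.1.1 / 2) := by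
    rintro c g hc hg ⟨s, α⟩
    rw [hA]
    have hs1 : Real.log ε ≤ s.1 := s.2.1
    have hs2 : s.1 ≤ 0 := s.2.2
    have hEpos : (0:ℝ) < Real.exp (-s.1/2) := Real.exp_pos _
    set aα : ℝ := if α then 1/2 + β else β with haα_def
    have haα1 : 0 < aα := by rcases α <;> simp [haα_def] <;> linarith
    have haα2 : aα ≤ 1/2 + β := by rcases α <;> simp [haα_def] <;> linarith
    have h1 : ‖∫ t in (Real.log ε - s.1)..(0:ℝ),
        g (pr (s.1 + t), true) * ((β * Real.exp ((1 - 1/2) * t) : ℝ) : ℂ)‖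
        ≤ (c * β * Real.exp (-s.1/2)) * |(0:ℝ) - (Real.log ε - s.1)| := by
      apply intervalIntegral.norm_integral_le_of_norm_le_const
      intro t ht
      rw [Set.uIoc_of_le (by linarith : Real.log ε - s.1 ≤ 0)] at ht
      have htmem : s.1 + t ∈ Set.Icc (Real.log ε) 0 := ⟨by linarith [ht.1], by linarith [ht.2]⟩
      have hproj : (pr (s.1 + t)).1 = s.1 + t := by
        rw [hpr_def, Set.projIcc_of_mem _ htmem]
      have hb : (0:ℝ) < β * Real.exp ((1 - 1/2) * t) := by positivity
      calc ‖g (pr (s.1 + t), true) * ((β * Real.exp ((1 - 1/2) * t) : ℝ) : ℂ)‖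
          = ‖g (pr (s.1 + t), true)‖ * (β * Real.exp ((1 - 1/2) * t)) := by
            rw [norm_mul, Complex.norm_real, Real.norm_eq_abs, abs_of_pos hb]
        _ ≤ (c * Real.exp (-(s.1 + t)/2)) * (β * Real.exp ((1 - 1/2) * t)) := by
            apply mul_le_mul_of_nonneg_right _ hb.le
            have h := hg (pr (s.1 + t), true)
            rwa [hproj] at h
        _ = c * β * (Real.exp (-(s.1 + t)/2) * Real.exp ((1 - 1/2) * t)) := by ring
        _ = c * β * Real.exp (-s.1/2) := by
            rw [← Real.exp_add]; congr 1; ring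
    have h2 : ‖∫ t in (0:ℝ)..(-s.1),
        g (pr (s.1 + t), false) * ((aα * Real.exp ((1/2) * t) : ℝ) : ℂ)‖
        ≤ (c * (1/2 + β) * Real.exp (-s.1/2)) * |(-s.1) - 0| := by
      apply intervalIntegral.norm_integral_le_of_norm_le_const
      intro t ht
      rw [Set.uIoc_of_le (by linarith : (0:ℝ) ≤ -s.1)] at ht
      have htmem : s.1 + t ∈ Set.Icc (Real.log ε) 0 := ⟨by linarith [ht.1], by linarith [ht.2]⟩
      have hproj : (pr (s.1 + t)).1 = s.1 + t := by
        rw [hpr_def, Set.projIcc_of_mem _ htmem]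
      have hb : (0:ℝ) < aα * Real.exp ((1/2) * t) := by positivity
      calc ‖g (pr (s.1 + t), false) * ((aα * Real.exp ((1/2) * t) : ℝ) : ℂ)‖
          = ‖g (pr (s.1 + t), false)‖ * (aα * Real.exp ((1/2) * t)) := by
            rw [norm_mul, Complex.norm_real, Real.norm_eq_abs, abs_of_pos hb]
        _ ≤ (c * Real.exp (-(s.1 + t)/2)) * (aα * Real.exp ((1/2) * t)) := by
            apply mul_le_mul_of_nonneg_right _ hb.le
            have h := hg (pr (s.1 + t), false)
            rwa [hproj] at h
        _ ≤ (c * Real.exp (-(s.1 + t)/2)) * ((1/2 + β) * Real.exp ((1/2) * t)) := by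
            apply mul_le_mul_of_nonneg_left _ (by positivity)
            exact mul_le_mul_of_nonneg_right haα2 (Real.exp_pos _).le
        _ = c * (1/2 + β) * (Real.exp (-(s.1 + t)/2) * Real.exp ((1/2) * t)) := by ring
        _ = c * (1/2 + β) * Real.exp (-s.1/2) := by
            rw [← Real.exp_add]; congr 1; ring
    calc ‖(∫ t in (Real.log ε - s.1)..(0:ℝ),
            g (pr (s.1 + t), true) * ((β * Real.exp ((1 - 1/2) * t) : ℝ) : ℂ))
          + ∫ t in (0:ℝ)..(-s.1),
            g (pr (s.1 + t), false) * ((aα * Real.exp ((1/2) * t) : ℝ) : ℂ)‖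
        ≤ ‖∫ t in (Real.log ε - s.1)..(0:ℝ),
            g (pr (s.1 + t), true) * ((β * Real.exp ((1 - 1/2) * t) : ℝ) : ℂ)‖
          + ‖∫ t in (0:ℝ)..(-s.1),
            g (pr (s.1 + t), false) * ((aα * Real.exp ((1/2) * t) : ℝ) : ℂ)‖ :=
          norm_add_le _ _
      _ ≤ (c * β * Real.exp (-s.1/2)) * |(0:ℝ) - (Real.log ε - s.1)|
          + (c * (1/2 + β) * Real.exp (-s.1/2)) * |(-s.1) - 0| := add_le_add h1 h2
      _ = (c * β * Real.exp (-s.1/2)) * (s.1 - Real.log ε)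
          + (c * (1/2 + β) * Real.exp (-s.1/2)) * (-s.1) := by
          rw [abs_of_nonneg (by linarith : (0:ℝ) ≤ 0 - (Real.log ε - s.1)),
            abs_of_nonneg (by linarith : (0:ℝ) ≤ -s.1 - 0)]
          ring
      _ ≤ (M * c) * Real.exp (-s.1/2) := by
          rw [hM_def]
          nlinarith [mul_nonneg (mul_nonneg hc hEpos.le) (sub_nonneg.2 hs1)]
  -- the one-step lower bound
  have key_lo : ∀ (c : ℝ) (g : C(Set.Icc (Real.log ε) (0:ℝ) × Bool, ℂ)), 0 ≤ c →
      (∀ y : Set.Icc (Real.log ε) (0:ℝ) × Bool, c * Real.exp (-y.1.1 / 2) ≤ (g y).re) →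
      ∀ y : Set.Icc (Real.log ε) (0:ℝ) × Bool,
        (m * c) * Real.exp (-y.1.1 / 2) ≤ (A g y).re := by
    rintro c g hc hg ⟨s, α⟩
    rw [hA, Complex.add_re]
    have hs1 : Real.log ε ≤ s.1 := s.2.1
    have hs2 : s.1 ≤ 0 := s.2.2
    have hEpos : (0:ℝ) < Real.exp (-s.1/2) := Real.exp_pos _
    set aα : ℝ := if α then 1/2 + β else β with haα_def
    have haα1 : β ≤ aα := by rcases α <;> simp [haα_def] <;> linarith
    have hint1c : Continuous fun t : ℝ =>
        g (pr (s.1 + t), true) * ((β * Real.exp ((1 - 1/2) * t) : ℝ) : ℂ) :=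
      (hcont g s.1 true).mul (Complex.continuous_ofReal.comp
        (continuous_const.mul (Real.continuous_exp.comp (continuous_const.mul continuous_id))))
    have hint2c : Continuous fun t : ℝ =>
        g (pr (s.1 + t), false) * ((aα * Real.exp ((1/2) * t) : ℝ) : ℂ) :=
      (hcont g s.1 false).mul (Complex.continuous_ofReal.comp
        (continuous_const.mul (Real.continuous_exp.comp (continuous_const.mul continuous_id))))
    have hre1 : (∫ t in (Real.log ε - s.1)..(0:ℝ),
          g (pr (s.1 + t), true) * ((β * Real.exp ((1 - 1/2) * t) : ℝ) : ℂ)).re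
        = ∫ t in (Real.log ε - s.1)..(0:ℝ),
          (g (pr (s.1 + t), true)).re * (β * Real.exp ((1 - 1/2) * t)) := by
      rw [show (∫ t in (Real.log ε - s.1)..(0:ℝ),
          g (pr (s.1 + t), true) * ((β * Real.exp ((1 - 1/2) * t) : ℝ) : ℂ)).re
        = Complex.reCLM (∫ t in (Real.log ε - s.1)..(0:ℝ),
          g (pr (s.1 + t), true) * ((β * Real.exp ((1 - 1/2) * t) : ℝ) : ℂ)) from rfl]
      rw [← ContinuousLinearMap.intervalIntegral_comp_comm Complex.reCLM
        (hint1c.intervalIntegrable _ _)]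
      congr 1
      ext t
      simp only [Complex.reCLM_apply, Complex.mul_re, Complex.ofReal_re, Complex.ofReal_im, mul_zero, sub_zero]
    have hre2 : (∫ t in (0:ℝ)..(-s.1),
          g (pr (s.1 + t), false) * ((aα * Real.exp ((1/2) * t) : ℝ) : ℂ)).re
        = ∫ t in (0:ℝ)..(-s.1),
          (g (pr (s.1 + t), false)).re * (aα * Real.exp ((1/2) * t)) := by
      rw [show (∫ t in (0:ℝ)..(-s.1),
          g (pr (s.1 + t), false) * ((aα * Real.exp ((1/2) * t) : ℝ) : ℂ)).re
        = Complex.reCLM (∫ t in (0:ℝ)..(-s.1),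
          g (pr (s.1 + t), false) * ((aα * Real.exp ((1/2) * t) : ℝ) : ℂ)) from rfl]
      rw [← ContinuousLinearMap.intervalIntegral_comp_comm Complex.reCLM
        (hint2c.intervalIntegrable _ _)]
      congr 1
      ext t
      simp only [Complex.reCLM_apply, Complex.mul_re, Complex.ofReal_re, Complex.ofReal_im, mul_zero, sub_zero]
    rw [hre1, hre2]
    have hlo1 : (c * β * Real.exp (-s.1/2)) * (0 - (Real.log ε - s.1))
        ≤ ∫ t in (Real.log ε - s.1)..(0:ℝ),
          (g (pr (s.1 + t), true)).re * (β * Real.exp ((1 - 1/2) * t)) := by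
      have h := intervalIntegral.integral_mono_on (μ := volume) (by linarith : Real.log ε - s.1 ≤ (0:ℝ))
        (intervalIntegrable_const (c := c * β * Real.exp (-s.1/2)))
        (((Complex.continuous_re.comp (hcont g s.1 true)).mul
          (continuous_const.mul (Real.continuous_exp.comp
            (continuous_const.mul continuous_id)))).intervalIntegrable _ _)
        (fun t ht => by
          have htmem : s.1 + t ∈ Set.Icc (Real.log ε) 0 :=
            ⟨by linarith [ht.1], by linarith [ht.2]⟩
          have hproj : (pr (s.1 + t)).1 = s.1 + t := by
            rw [hpr_def, Set.projIcc_of_mem _ htmem]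
          have h := hg (pr (s.1 + t), true)
          rw [hproj] at h
          have hkey : c * β * Real.exp (-s.1/2)
              = (c * Real.exp (-(s.1 + t)/2)) * (β * Real.exp ((1 - 1/2) * t)) := by
            rw [show (c * Real.exp (-(s.1 + t)/2)) * (β * Real.exp ((1 - 1/2) * t))
              = c * β * (Real.exp (-(s.1 + t)/2) * Real.exp ((1 - 1/2) * t)) from by ring,
              ← Real.exp_add]
            congr 1
            ring
          rw [hkey]
          exact mul_le_mul_of_nonneg_right h (by positivity))
      rw [intervalIntegral.integral_const, smul_eq_mul] at h
      calc (c * β * Real.exp (-s.1/2)) * (0 - (Real.log ε - s.1))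
          = (0 - (Real.log ε - s.1)) * (c * β * Real.exp (-s.1/2)) := by ring
        _ ≤ _ := h
    have hlo2 : (c * β * Real.exp (-s.1/2)) * (-s.1 - 0)
        ≤ ∫ t in (0:ℝ)..(-s.1),
          (g (pr (s.1 + t), false)).re * (aα * Real.exp ((1/2) * t)) := by
      have h := intervalIntegral.integral_mono_on (μ := volume) (by linarith : (0:ℝ) ≤ -s.1)
        (intervalIntegrable_const (c := c * β * Real.exp (-s.1/2)))
        (((Complex.continuous_re.comp (hcont g s.1 false)).mul
          (continuous_const.mul (Real.continuous_exp.comp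
            (continuous_const.mul continuous_id)))).intervalIntegrable _ _)
        (fun t ht => by
          have htmem : s.1 + t ∈ Set.Icc (Real.log ε) 0 :=
            ⟨by linarith [ht.1], by linarith [ht.2]⟩
          have hproj : (pr (s.1 + t)).1 = s.1 + t := by
            rw [hpr_def, Set.projIcc_of_mem _ htmem]
          have h := hg (pr (s.1 + t), false)
          rw [hproj] at h
          have hb : (0:ℝ) ≤ Real.exp ((1/2) * t) := (Real.exp_pos _).le
          have hge : c * Real.exp (-(s.1 + t)/2) * (β * Real.exp ((1/2) * t))
              ≤ (g (pr (s.1 + t), false)).re * (aα * Real.exp ((1/2) * t)) := by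
            have h1 : c * Real.exp (-(s.1 + t)/2) * (β * Real.exp ((1/2) * t))
                ≤ c * Real.exp (-(s.1 + t)/2) * (aα * Real.exp ((1/2) * t)) := by
              apply mul_le_mul_of_nonneg_left _ (by positivity)
              exact mul_le_mul_of_nonneg_right haα1 hb
            have h2 : c * Real.exp (-(s.1 + t)/2) * (aα * Real.exp ((1/2) * t))
                ≤ (g (pr (s.1 + t), false)).re * (aα * Real.exp ((1/2) * t)) := by
              apply mul_le_mul_of_nonneg_right h
              have haα0 : (0:ℝ) < aα := lt_of_lt_of_le hβ haα1
              positivity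
            linarith
          have hkey : c * β * Real.exp (-s.1/2)
              = c * Real.exp (-(s.1 + t)/2) * (β * Real.exp ((1/2) * t)) := by
            rw [show c * Real.exp (-(s.1 + t)/2) * (β * Real.exp ((1/2) * t))
              = c * β * (Real.exp (-(s.1 + t)/2) * Real.exp ((1/2) * t)) from by ring,
              ← Real.exp_add]
            congr 1
            ring
          rw [hkey]
          exact hge)
      rw [intervalIntegral.integral_const, smul_eq_mul] at h
      calc (c * β * Real.exp (-s.1/2)) * (-s.1 - 0)
          = (-s.1 - 0) * (c * β * Real.exp (-s.1/2)) := by ring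
        _ ≤ _ := h
    have hfin : (m * c) * Real.exp (-s.1/2)
        ≤ (c * β * Real.exp (-s.1/2)) * (0 - (Real.log ε - s.1))
          + (c * β * Real.exp (-s.1/2)) * (-s.1 - 0) := by
      rw [hm_def]
      nlinarith [mul_nonneg hc hEpos.le]
    linarith
  -- iterate the upper bound
  have pow_up : ∀ (n : ℕ) (c : ℝ) (g : C(Set.Icc (Real.log ε) (0:ℝ) × Bool, ℂ)), 0 ≤ c →
      (∀ y : Set.Icc (Real.log ε) (0:ℝ) × Bool, ‖g y‖ ≤ c * Real.exp (-y.1.1 / 2)) →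
      ∀ y : Set.Icc (Real.log ε) (0:ℝ) × Bool,
        ‖(A ^ n) g y‖ ≤ M ^ n * c * Real.exp (-y.1.1 / 2) := by
    intro n
    induction n with
    | zero => intro c g hc hg y; simpa using hg y
    | succ n ih =>
      intro c g hc hg y
      have hAg := key_up c g hc hg
      have h2 := ih (M * c) (A g) (by positivity) hAg y
      rw [show A ^ (n + 1) = A ^ n * A from pow_succ A n,
        ContinuousLinearMap.mul_apply]
      calc ‖(A ^ n) (A g) y‖ ≤ M ^ n * (M * c) * Real.exp (-y.1.1 / 2) := h2
        _ = M ^ (n + 1) * c * Real.exp (-y.1.1 / 2) := by ring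
  -- iterate the lower bound
  have pow_lo : ∀ (n : ℕ) (c : ℝ) (g : C(Set.Icc (Real.log ε) (0:ℝ) × Bool, ℂ)), 0 ≤ c →
      (∀ y : Set.Icc (Real.log ε) (0:ℝ) × Bool, c * Real.exp (-y.1.1 / 2) ≤ (g y).re) →
      ∀ y : Set.Icc (Real.log ε) (0:ℝ) × Bool,
        m ^ n * c * Real.exp (-y.1.1 / 2) ≤ ((A ^ n) g y).re := by
    intro n
    induction n with
    | zero => intro c g hc hg y; simpa using hg y
    | succ n ih =>
      intro c g hc hg y
      have hAg := key_lo c g hc hg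
      have h2 := ih (m * c) (A g) (by positivity) hAg y
      rw [show A ^ (n + 1) = A ^ n * A from pow_succ A n,
        ContinuousLinearMap.mul_apply]
      calc m ^ (n + 1) * c * Real.exp (-y.1.1 / 2)
          = m ^ n * (m * c) * Real.exp (-y.1.1 / 2) := by ring
        _ ≤ ((A ^ n) (A g) y).re := h2
  -- norm bounds on powers
  have hw1 : ∀ y : Set.Icc (Real.log ε) (0:ℝ) × Bool, (1:ℝ) ≤ Real.exp (-y.1.1 / 2) :=
    fun y => Real.one_le_exp (by have := y.1.2.2; linarith)
  have hwC : ∀ y : Set.Icc (Real.log ε) (0:ℝ) × Bool,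
      Real.exp (-y.1.1 / 2) ≤ Real.exp (-Real.log ε / 2) :=
    fun y => Real.exp_le_exp.2 (by have := y.1.2.1; linarith)
  have hAn_up : ∀ n : ℕ, ‖A ^ n‖ ≤ Real.exp (-Real.log ε / 2) * M ^ n := by
    intro n
    apply ContinuousLinearMap.opNorm_le_bound _ (by positivity)
    intro g
    rw [ContinuousMap.norm_le _ (by positivity)]
    intro y
    have hg : ∀ y : Set.Icc (Real.log ε) (0:ℝ) × Bool,
        ‖g y‖ ≤ ‖g‖ * Real.exp (-y.1.1 / 2) := fun y =>
      le_trans (g.norm_coe_le_norm y) (le_mul_of_one_le_right (norm_nonneg g) (hw1 y))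
    calc ‖(A ^ n) g y‖ ≤ M ^ n * ‖g‖ * Real.exp (-y.1.1 / 2) :=
          pow_up n ‖g‖ g (norm_nonneg g) hg y
      _ ≤ M ^ n * ‖g‖ * Real.exp (-Real.log ε / 2) := by
          apply mul_le_mul_of_nonneg_left (hwC y) (by positivity)
      _ = Real.exp (-Real.log ε / 2) * M ^ n * ‖g‖ := by ring
  -- the witness function for the lower bound
  set g0 : C(Set.Icc (Real.log ε) (0:ℝ) × Bool, ℂ) :=
    ⟨fun y => ((Real.exp (-y.1.1 / 2) : ℝ) : ℂ),
      Complex.continuous_ofReal.comp (Real.continuous_exp.comp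
        ((continuous_subtype_val.comp continuous_fst).neg.div_const 2))⟩ with hg0_def
  have hg0re : ∀ y : Set.Icc (Real.log ε) (0:ℝ) × Bool,
      (1:ℝ) * Real.exp (-y.1.1 / 2) ≤ (g0 y).re := by
    intro y
    show (1:ℝ) * Real.exp (-y.1.1 / 2) ≤ ((Real.exp (-y.1.1 / 2) : ℝ) : ℂ).re
    rw [Complex.ofReal_re, one_mul]
  have hg0norm : ‖g0‖ ≤ Real.exp (-Real.log ε / 2) := by
    rw [ContinuousMap.norm_le _ (Real.exp_pos _).le]
    intro y
    show ‖((Real.exp (-y.1.1 / 2) : ℝ) : ℂ)‖ ≤ Real.exp (-Real.log ε / 2)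
    rw [Complex.norm_real, Real.norm_eq_abs, Real.abs_exp]
    exact hwC y
  have hAn_lo : ∀ n : ℕ, m ^ n * Real.exp (Real.log ε / 2) ≤ ‖A ^ n‖ := by
    intro n
    have hy0mem : (0:ℝ) ∈ Set.Icc (Real.log ε) (0:ℝ) := Set.right_mem_Icc.2 hl0
    have h1 := pow_lo n 1 g0 zero_le_one hg0re (⟨(0:ℝ), hy0mem⟩, true)
    have h2 : m ^ n ≤ ((A ^ n) g0 (⟨(0:ℝ), hy0mem⟩, true)).re := by
      simpa using h1
    have h3 : ((A ^ n) g0 (⟨(0:ℝ), hy0mem⟩, true)).re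
        ≤ ‖(A ^ n) g0 (⟨(0:ℝ), hy0mem⟩, true)‖ := Complex.re_le_norm _
    have h4 : ‖(A ^ n) g0 (⟨(0:ℝ), hy0mem⟩, true)‖ ≤ ‖(A ^ n) g0‖ :=
      ContinuousMap.norm_coe_le_norm _ _
    have h5 : ‖(A ^ n) g0‖ ≤ ‖A ^ n‖ * Real.exp (-Real.log ε / 2) := by
      calc ‖(A ^ n) g0‖ ≤ ‖A ^ n‖ * ‖g0‖ := (A ^ n).le_opNorm g0
        _ ≤ ‖A ^ n‖ * Real.exp (-Real.log ε / 2) :=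
          mul_le_mul_of_nonneg_left hg0norm (ContinuousLinearMap.opNorm_nonneg _)
    have h6 : m ^ n ≤ ‖A ^ n‖ * Real.exp (-Real.log ε / 2) := by linarith
    have hE : (0:ℝ) < Real.exp (-Real.log ε / 2) := Real.exp_pos _
    have h7 : m ^ n * Real.exp (Real.log ε / 2) * Real.exp (-Real.log ε / 2) = m ^ n := by
      rw [mul_assoc, ← Real.exp_add,
        show Real.log ε / 2 + -Real.log ε / 2 = 0 from by ring, Real.exp_zero, mul_one]
    exact le_of_mul_le_mul_right (by rw [h7]; exact h6) hE
  -- Gelfand's formula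
  have htend := spectrum.pow_norm_pow_one_div_tendsto_nhds_spectralRadius A
  have hlog : Real.log (1 / ε) = -Real.log ε := by rw [one_div, Real.log_inv]
  constructor
  · -- lower bound
    have hconst : Filter.Tendsto (fun n : ℕ => Real.exp (Real.log ε / 2) ^ (1 / (n:ℝ)))
        Filter.atTop (nhds 1) := by
      have h0 := (Real.continuousAt_const_rpow (a := Real.exp (Real.log ε / 2))
        (ne_of_gt (Real.exp_pos _))).tendsto.comp tendsto_one_div_atTop_nhds_zero_nat
      simpa [Real.rpow_zero, Function.comp_def] using h0
    have hgt : Filter.Tendsto (fun n : ℕ =>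
        ENNReal.ofReal (Real.exp (Real.log ε / 2) ^ (1 / (n:ℝ)) * m)) Filter.atTop
        (nhds (ENNReal.ofReal m)) := by
      apply ENNReal.tendsto_ofReal
      simpa using hconst.mul_const m
    have hev : ∀ᶠ n : ℕ in Filter.atTop,
        ENNReal.ofReal (Real.exp (Real.log ε / 2) ^ (1 / (n:ℝ)) * m)
          ≤ ENNReal.ofReal (‖A ^ n‖ ^ (1 / (n:ℝ))) := by
      filter_upwards [Filter.eventually_ge_atTop 1] with n hn
      apply ENNReal.ofReal_le_ofReal
      have hn0 : (0:ℝ) < n := by exact_mod_cast hn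
      have hb : (0:ℝ) ≤ m ^ n * Real.exp (Real.log ε / 2) := by positivity
      have hmono := Real.rpow_le_rpow hb (hAn_lo n) (by positivity : (0:ℝ) ≤ 1 / (n:ℝ))
      calc Real.exp (Real.log ε / 2) ^ (1 / (n:ℝ)) * m
          = (m ^ n * Real.exp (Real.log ε / 2)) ^ (1 / (n:ℝ)) := by
            rw [Real.mul_rpow (by positivity) (Real.exp_pos _).le,
              ← Real.rpow_natCast m n, ← Real.rpow_mul hm0.le]
            rw [mul_one_div_cancel (ne_of_gt hn0), Real.rpow_one]
            ring
        _ ≤ ‖A ^ n‖ ^ (1 / (n:ℝ)) := hmono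
    rw [hlog, show β * -Real.log ε = m from rfl]
    exact le_of_tendsto_of_tendsto hgt htend hev
  · -- upper bound
    have hconst : Filter.Tendsto (fun n : ℕ => Real.exp (-Real.log ε / 2) ^ (1 / (n:ℝ)))
        Filter.atTop (nhds 1) := by
      have h0 := (Real.continuousAt_const_rpow (a := Real.exp (-Real.log ε / 2))
        (ne_of_gt (Real.exp_pos _))).tendsto.comp tendsto_one_div_atTop_nhds_zero_nat
      simpa [Real.rpow_zero, Function.comp_def] using h0
    have hgt : Filter.Tendsto (fun n : ℕ =>
        ENNReal.ofReal (Real.exp (-Real.log ε / 2) ^ (1 / (n:ℝ)) * M)) Filter.atTop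
        (nhds (ENNReal.ofReal M)) := by
      apply ENNReal.tendsto_ofReal
      simpa using hconst.mul_const M
    have hev : ∀ᶠ n : ℕ in Filter.atTop,
        ENNReal.ofReal (‖A ^ n‖ ^ (1 / (n:ℝ)))
          ≤ ENNReal.ofReal (Real.exp (-Real.log ε / 2) ^ (1 / (n:ℝ)) * M) := by
      filter_upwards [Filter.eventually_ge_atTop 1] with n hn
      apply ENNReal.ofReal_le_ofReal
      have hn0 : (0:ℝ) < n := by exact_mod_cast hn
      have hmono := Real.rpow_le_rpow (ContinuousLinearMap.opNorm_nonneg (A ^ n)) (hAn_up n)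
        (by positivity : (0:ℝ) ≤ 1 / (n:ℝ))
      calc ‖A ^ n‖ ^ (1 / (n:ℝ))
          ≤ (Real.exp (-Real.log ε / 2) * M ^ n) ^ (1 / (n:ℝ)) := hmono
        _ = Real.exp (-Real.log ε / 2) ^ (1 / (n:ℝ)) * M := by
            rw [Real.mul_rpow (Real.exp_pos _).le (by positivity),
              ← Real.rpow_natCast M n, ← Real.rpow_mul hM0.le]
            rw [mul_one_div_cancel (ne_of_gt hn0), Real.rpow_one]
    rw [hlog, show (1/2 + β) * -Real.log ε = M from rfl]
    exact le_of_tendsto_of_tendsto htend hgt hev
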